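/- (Split conformal coverage.) Let S₁, …, S_{m+1} be exchangeable real-valued random variables, δ ∈ (0,1), and let q̂ be the ⌈(m+1)(1−δ)⌉-th smallest value among S₁, …, S_m (with q̂ = +∞ if ⌈(m+1)(1−δ)⌉ > m). Then P(S_{m+1} ≤ q̂) ≥ 1 − δ. -/

import Mathlib

open MeasureTheory
open scoped ENNReal

/-- The `k`-th smallest value (k ≥ 1) among the entries of `v : Fin m → ℝ`. -/
noncomputable def kthSmallest {m : ℕ} (v : Fin m → ℝ) (k : ℕ) : ℝ :=
  (List.insertionSort (· ≤ ·) (List.ofFn v)).getD (k - 1) 0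

open Finset in
private lemma countP_ofFn_aux {n : ℕ} (v : Fin n → ℝ) (p : ℝ → Prop) [DecidablePred p] :
    (List.ofFn v).countP (fun a => decide (p a)) = (univ.filter (fun i => p (v i))).card := by
  rw [List.ofFn_eq_map, List.countP_map, List.countP_eq_length_filter, Fin.univ_def]
  simp only [Finset.filter, Finset.card_mk, Multiset.filter_coe, Multiset.coe_card]
  rfl

open Finset in
private lemma rank_card_aux {n : ℕ} (s : Fin n → ℝ) (k : ℕ) (hk : k ≤ n) :
    k ≤ (univ.filter (fun j => (univ.filter (fun i => s i < s j)).card < k)).card := by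
  classical
  by_contra h
  push_neg at h
  set T := univ.filter (fun j => (univ.filter (fun i => s i < s j)).card < k) with hT
  have hne : (univ \ T).Nonempty := by
    rw [Finset.sdiff_nonempty]
    intro hsub
    have := Finset.card_le_card hsub
    simp only [Finset.card_univ, Fintype.card_fin] at this
    omega
  obtain ⟨j, hj, hmin⟩ := Finset.exists_min_image _ s hne
  have hjT : j ∉ T := (Finset.mem_sdiff.mp hj).2
  have hsub : univ.filter (fun i => s i < s j) ⊆ T := by
    intro i hi
    simp only [Finset.mem_filter] at hi
    by_contra hiT
    have := hmin i (Finset.mem_sdiff.mpr ⟨Finset.mem_univ i, hiT⟩)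
    linarith [hi.2]
  have hjk : (univ.filter (fun i => s i < s j)).card < k :=
    lt_of_le_of_lt (Finset.card_le_card hsub) h
  exact hjT (Finset.mem_filter.mpr ⟨Finset.mem_univ j, hjk⟩)

open Finset in
private lemma le_kthSmallest_iff_aux {m : ℕ} (v : Fin m → ℝ) (k : ℕ) (hk1 : 1 ≤ k)
    (hkm : k ≤ m) (x : ℝ) :
    x ≤ kthSmallest v k ↔ (univ.filter (fun i => v i < x)).card ≤ k - 1 := by
  classical
  set l := List.insertionSort (· ≤ ·) (List.ofFn v) with hl
  have hsorted : l.Pairwise (· ≤ ·) := List.pairwise_insertionSort _ _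
  have hperm : l.Perm (List.ofFn v) := List.perm_insertionSort _ _
  have hlen : l.length = m := by rw [hperm.length_eq, List.length_ofFn]
  have hkl : k - 1 < l.length := by omega
  have hget : kthSmallest v k = l.get ⟨k - 1, hkl⟩ := by
    rw [kthSmallest, ← hl, List.getD_eq_get _ _ ⟨k - 1, hkl⟩]
  have hcount : (univ.filter (fun i => v i < x)).card
      = (univ.filter (fun p : Fin l.length => l.get p < x)).card := by
    rw [← countP_ofFn_aux v (fun a => a < x), ← countP_ofFn_aux l.get (fun a => a < x),
      List.ofFn_get, ← hperm.countP_eq]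
  set K : Fin l.length := ⟨k - 1, hkl⟩ with hK
  rw [hget, hcount]
  constructor
  · intro hx
    have hsubset : univ.filter (fun p : Fin l.length => l.get p < x) ⊆ Finset.Iio K := by
      intro p hp
      simp only [Finset.mem_filter] at hp
      rw [Finset.mem_Iio]
      by_contra hpK
      push_neg at hpK
      have : l.get K ≤ l.get p := hsorted.rel_get_of_le hpK
      linarith [hp.2]
    calc (univ.filter (fun p : Fin l.length => l.get p < x)).card
        ≤ (Finset.Iio K).card := Finset.card_le_card hsubset
      _ = k - 1 := Fin.card_Iio K
  · intro hc
    by_contra hx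
    push_neg at hx
    have hsubset : Finset.Iic K ⊆ univ.filter (fun p : Fin l.length => l.get p < x) := by
      intro p hp
      rw [Finset.mem_Iic] at hp
      refine Finset.mem_filter.mpr ⟨Finset.mem_univ _, ?_⟩
      exact lt_of_le_of_lt (hsorted.rel_get_of_le hp) hx
    have := Finset.card_le_card hsubset
    rw [Fin.card_Iic] at this
    simp only [hK] at this
    omega

open Finset in
private lemma cnt_last_aux {m : ℕ} (s : Fin (m + 1) → ℝ) :
    (univ.filter (fun i : Fin (m + 1) => s i < s (Fin.last m))).card
      = (univ.filter (fun i : Fin m => s i.castSucc < s (Fin.last m))).card := by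
  classical
  rw [Fin.univ_castSuccEmb, Finset.filter_cons, if_neg (by simp), Finset.filter_map,
    Finset.card_map]
  rfl

open Finset in
private lemma cnt_perm_aux {n : ℕ} (s : Fin n → ℝ) (σ : Equiv.Perm (Fin n)) (j : Fin n) :
    (univ.filter (fun i => s (σ i) < s (σ j))).card
      = (univ.filter (fun i => s i < s (σ j))).card := by
  classical
  apply Finset.card_bij' (fun a _ => σ a) (fun a _ => σ.symm a) <;> simp

private lemma meas_cnt_aux {Ω : Type*} [MeasurableSpace Ω] {n : ℕ} (f : Fin n → Ω → ℝ)
    (hf : ∀ i, Measurable (f i)) (j : Fin n) :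
    Measurable (fun ω => (Finset.univ.filter (fun i => f i ω < f j ω)).card) := by
  classical
  have heq : (fun ω => (Finset.univ.filter (fun i => f i ω < f j ω)).card)
      = fun ω => ∑ i, if f i ω < f j ω then 1 else 0 := by
    funext ω; rw [Finset.card_filter]
  rw [heq]
  exact Finset.measurable_sum _ fun i _ =>
    Measurable.ite (measurableSet_lt (hf i) (hf j)) measurable_const measurable_const

/-- Split conformal coverage: if `S₁,…,S_{m+1}` are exchangeable real-valued random
variables, `δ ∈ (0,1)`, and `q̂` is the `⌈(m+1)(1−δ)⌉`-th smallest of the first `m`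
scores (with `q̂ = +∞` if `⌈(m+1)(1−δ)⌉ > m`), then `P(S_{m+1} ≤ q̂) ≥ 1 − δ`. -/
theorem split_conformal_coverage {Ω : Type*} [MeasurableSpace Ω]
    (μ : Measure Ω) [IsProbabilityMeasure μ]
    (m : ℕ) (S : Fin (m + 1) → Ω → ℝ) (hmeas : ∀ i, Measurable (S i))
    (hexch : ∀ σ : Equiv.Perm (Fin (m + 1)),
      μ.map (fun ω => fun i => S (σ i) ω) = μ.map (fun ω => fun i => S i ω))
    (δ : ℝ) (hδ : δ ∈ Set.Ioo (0 : ℝ) 1)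
    (qhat : Ω → EReal)
    (hq : qhat = fun ω =>
      if ⌈((m : ℝ) + 1) * (1 - δ)⌉₊ ≤ m then
        ((kthSmallest (fun i : Fin m => S i.castSucc ω) ⌈((m : ℝ) + 1) * (1 - δ)⌉₊ : ℝ) : EReal)
      else ⊤) :
    ENNReal.ofReal (1 - δ) ≤ μ {ω | ((S (Fin.last m) ω : ℝ) : EReal) ≤ qhat ω} := by
  classical
  obtain ⟨hδ0, hδ1⟩ := hδ
  set k : ℕ := ⌈((m : ℝ) + 1) * (1 - δ)⌉₊ with hkdef
  have hk1 : 1 ≤ k := by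
    rw [hkdef]
    exact Nat.one_le_iff_ne_zero.mpr (by
      simp only [ne_eq, Nat.ceil_eq_zero, not_le]
      nlinarith [Nat.cast_nonneg (α := ℝ) m])
  by_cases hkm : k ≤ m
  swap
  · -- k > m : qhat = ⊤, event is everything
    have : {ω | ((S (Fin.last m) ω : ℝ) : EReal) ≤ qhat ω} = Set.univ := by
      ext ω
      simp [hq, hkm, le_top]
    rw [this, measure_univ]
    exact ENNReal.ofReal_le_one.mpr (by linarith)
  -- main case
  set c : Fin (m + 1) → Ω → ℕ :=
    fun j ω => (Finset.univ.filter (fun i => S i ω < S j ω)).card with hc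
  set A : Fin (m + 1) → Set Ω := fun j => {ω | c j ω < k} with hA
  have hAmeas : ∀ j, MeasurableSet (A j) := by
    intro j
    have := meas_cnt_aux S hmeas j
    exact this (show MeasurableSet (Set.Iio k) by trivial)
  -- the event equals A (last m)
  have hevent : {ω | ((S (Fin.last m) ω : ℝ) : EReal) ≤ qhat ω} = A (Fin.last m) := by
    ext ω
    simp only [hq, hkm, if_true, Set.mem_setOf_eq, EReal.coe_le_coe_iff, hA, hc]
    rw [le_kthSmallest_iff_aux _ k hk1 hkm, ← cnt_last_aux (fun i => S i ω)]
    omega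
  rw [hevent]
  -- all A j have the same measure
  have hvec : Measurable (fun ω => fun i : Fin (m + 1) => S i ω) :=
    measurable_pi_lambda _ hmeas
  have hBmeas : MeasurableSet {s : Fin (m + 1) → ℝ |
      (Finset.univ.filter (fun i => s i < s (Fin.last m))).card < k} := by
    have := meas_cnt_aux (fun i (s : Fin (m + 1) → ℝ) => s i)
      (fun i => measurable_pi_apply i) (Fin.last m)
    exact this (show MeasurableSet (Set.Iio k) by trivial)
  have hsame : ∀ j, μ (A j) = μ (A (Fin.last m)) := by
    intro j
    set σ : Equiv.Perm (Fin (m + 1)) := Equiv.swap (Fin.last m) j with hσ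
    have hσlast : σ (Fin.last m) = j := Equiv.swap_apply_left _ _
    have hvecσ : Measurable (fun ω => fun i : Fin (m + 1) => S (σ i) ω) :=
      measurable_pi_lambda _ (fun i => hmeas (σ i))
    have h1 := congrArg (fun ν : Measure (Fin (m + 1) → ℝ) =>
      ν {s | (Finset.univ.filter (fun i => s i < s (Fin.last m))).card < k}) (hexch σ)
    rw [Measure.map_apply hvecσ hBmeas, Measure.map_apply hvec hBmeas] at h1
    have hpre1 : (fun ω => fun i : Fin (m + 1) => S (σ i) ω) ⁻¹'
        {s | (Finset.univ.filter (fun i => s i < s (Fin.last m))).card < k} = A j := by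
      ext ω
      simp only [Set.mem_preimage, Set.mem_setOf_eq, hA, hc]
      have h := cnt_perm_aux (fun i => S i ω) σ (Fin.last m)
      simp only [hσlast] at h ⊢
      rw [h]
    have hpre2 : (fun ω => fun i : Fin (m + 1) => S i ω) ⁻¹'
        {s | (Finset.univ.filter (fun i => s i < s (Fin.last m))).card < k}
        = A (Fin.last m) := by
      ext ω
      simp only [Set.mem_preimage, Set.mem_setOf_eq, hA, hc]
    rw [hpre1, hpre2] at h1
    exact h1
  -- sum of measures is at least k
  have hsumge : (k : ℝ≥0∞) ≤ ∑ j : Fin (m + 1), μ (A j) := by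
    have hint : ∀ j : Fin (m + 1), μ (A j) = ∫⁻ ω, (A j).indicator 1 ω ∂μ := by
      intro j
      rw [lintegral_indicator_one (hAmeas j)]
    calc (k : ℝ≥0∞) = ∫⁻ _, (k : ℝ≥0∞) ∂μ := by
          rw [lintegral_const, measure_univ, mul_one]
      _ ≤ ∫⁻ ω, ∑ j : Fin (m + 1), (A j).indicator 1 ω ∂μ := by
          apply lintegral_mono
          intro ω
          show (k : ℝ≥0∞) ≤ ∑ j : Fin (m + 1), (A j).indicator 1 ω
          have : ∑ j : Fin (m + 1), (A j).indicator (1 : Ω → ℝ≥0∞) ω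
              = ((Finset.univ.filter (fun j : Fin (m + 1) => c j ω < k)).card : ℝ≥0∞) := by
            rw [← Finset.sum_boole]
            apply Finset.sum_congr rfl
            intro j _
            simp [Set.indicator_apply, hA, Set.mem_setOf_eq]
          rw [this]
          exact_mod_cast rank_card_aux (fun i => S i ω) k (by omega)
      _ = ∑ j : Fin (m + 1), ∫⁻ ω, (A j).indicator 1 ω ∂μ := by
          rw [lintegral_finset_sum]
          intro j _
          exact measurable_one.indicator (hAmeas j)
      _ = ∑ j : Fin (m + 1), μ (A j) := by
          exact Finset.sum_congr rfl fun j _ => (hint j).symm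
  have hsumeq : ∑ j : Fin (m + 1), μ (A j) = (m + 1 : ℝ≥0∞) * μ (A (Fin.last m)) := by
    rw [Finset.sum_congr rfl fun j _ => hsame j, Finset.sum_const, Finset.card_univ,
      Fintype.card_fin, nsmul_eq_mul]
    push_cast
    ring
  rw [hsumeq] at hsumge
  -- final arithmetic
  have hmono : ENNReal.ofReal (1 - δ) * (m + 1 : ℝ≥0∞) ≤ (k : ℝ≥0∞) := by
    have h1 : ((m : ℝ) + 1) * (1 - δ) ≤ (k : ℝ) := Nat.le_ceil _
    have h2 : ENNReal.ofReal (1 - δ) * (m + 1 : ℝ≥0∞)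
        = ENNReal.ofReal ((1 - δ) * ((m : ℝ) + 1)) := by
      rw [ENNReal.ofReal_mul (by linarith)]
      congr 1
      rw [ENNReal.ofReal_add (by positivity) zero_le_one]
      simp [ENNReal.ofReal_natCast]
    rw [h2, show ((k : ℝ≥0∞)) = ENNReal.ofReal (k : ℝ) by rw [ENNReal.ofReal_natCast]]
    exact ENNReal.ofReal_le_ofReal (by linarith)
  have hfinal : ENNReal.ofReal (1 - δ) * (m + 1 : ℝ≥0∞)
      ≤ μ (A (Fin.last m)) * (m + 1 : ℝ≥0∞) := by
    rw [mul_comm (μ (A (Fin.last m)))]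
    exact le_trans hmono hsumge
  have hne0 : ((m : ℝ≥0∞) + 1) ≠ 0 := by simp
  have hnetop : ((m : ℝ≥0∞) + 1) ≠ ⊤ := by simp [ENNReal.add_ne_top]
  exact (ENNReal.mul_le_mul_iff_left hne0 hnetop).mp hfinal
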